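/- Let G, A, B be groups and φ₁ : G → A, φ₂ : G → B surjective homomorphisms, φ(x) = (φ₁(x), φ₂(x)). Then the index of im φ in A × B is finite if and only if the index of ker φ₁ · ker φ₂ in G is finite, and in that case the two indices are equal. -/
import Mathlib

theorem stmt_8 {G A B : Type*} [Group G] [Group A] [Group B]
    (φ₁ : G →* A) (φ₂ : G →* B)
    (h₁ : Function.Surjective φ₁) (h₂ : Function.Surjective φ₂) :
    ((φ₁.prod φ₂).range.index ≠ 0 ↔ (φ₁.ker ⊔ φ₂.ker).index ≠ 0) ∧
      (φ₁.prod φ₂).range.index = (φ₁.ker ⊔ φ₂.ker).index := by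
  set K := φ₁.ker ⊔ φ₂.ker with hK
  set R := (φ₁.prod φ₂).range with hR
  suffices h : R.index = K.index by exact ⟨by rw [h], h⟩
  rw [Subgroup.index, Subgroup.index]
  refine (Nat.card_congr ?_).symm
  refine Equiv.ofBijective
    (fun q => Quotient.liftOn' q (fun x => QuotientGroup.mk (s := R) (φ₁ x, 1)) ?_)
    ⟨?_, ?_⟩
  · intro a b hab
    rw [QuotientGroup.leftRel_apply] at hab
    have hab' : a⁻¹ * b ∈ (K : Set G) := hab
    rw [hK, Subgroup.mul_normal] at hab'
    obtain ⟨n₁, hn₁, n₂, hn₂, hmul⟩ := hab'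
    refine Quotient.sound' ?_
    rw [QuotientGroup.leftRel_apply]
    refine ⟨n₂, ?_⟩
    simp only at hmul
    have hb : b = a * (n₁ * n₂) := by
      rw [hmul]; group
    simp only [MonoidHom.prod_apply, Prod.ext_iff, Prod.inv_mk, Prod.mk_mul_mk]
    constructor
    · rw [hb]
      simp [MonoidHom.mem_ker.mp hn₁]
    · simp [MonoidHom.mem_ker.mp hn₂]
  · -- injective
    intro q₁ q₂
    refine Quotient.inductionOn₂' q₁ q₂ ?_
    intro a b h
    have h' := Quotient.exact' h
    rw [QuotientGroup.leftRel_apply] at h'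
    obtain ⟨g, hg⟩ := h'
    simp only [MonoidHom.prod_apply, Prod.ext_iff, Prod.inv_mk, Prod.mk_mul_mk] at hg
    refine Quotient.sound' ?_
    rw [QuotientGroup.leftRel_apply]
    have hx : a⁻¹ * b = ((a⁻¹ * b) * g⁻¹) * g := by group
    rw [hx]
    refine Subgroup.mul_mem_sup ?_ ?_
    · rw [MonoidHom.mem_ker]
      simp only [map_mul, map_inv, hg.1]
      group
    · rw [MonoidHom.mem_ker]
      simpa using hg.2
  · -- surjective
    rintro q
    refine Quotient.inductionOn' q ?_
    rintro ⟨a, b⟩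
    obtain ⟨g, hg⟩ := h₂ b
    obtain ⟨z, hz⟩ := h₁ (a * (φ₁ g)⁻¹)
    refine ⟨QuotientGroup.mk z, ?_⟩
    refine Quotient.sound' ?_
    rw [QuotientGroup.leftRel_apply]
    refine ⟨g, ?_⟩
    simp [hz, hg, mul_assoc]
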